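/- For each integer n ≥ 1, consider a recursive estimation process (θ̂_t^{(n)})_{t≥0} with θ̂_0^{(n)} = θ* and per-step conditional tail bound with rate function r(m) = m^κ, where κ ≥ γ/2, sample sizes n_0 = n, n_t = c_t·n with c_t = t^{1+s} for some s > 0, and which additionally is a martingale: E[θ̂_t^{(n)} | F_{t−1}] = θ̂_{t−1}^{(n)} almost surely for every t ≥ 1. Then for every δ > 0, lim_{n→∞} limsup_{T→∞} P(‖θ̂_T^{(n)} − θ*‖₂ ≥ δ) = 0. -/

import Mathlib

open MeasureTheory ProbabilityTheory Filter

/-- The Euclidean (`ℓ²`) norm of a vector in `ℝ^p`. -/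
noncomputable def l2norm {p : ℕ} (x : Fin p → ℝ) : ℝ := Real.sqrt (∑ i, (x i) ^ 2)

namespace Stmt5Aux

lemma div_pow_le_exp {x : ℝ} (hx : 0 ≤ x) {m : ℕ} (hm : 1 ≤ m) :
    (x / m) ^ m ≤ Real.exp x := by
  have hm0 : (0:ℝ) < m := by exact_mod_cast hm
  have h1 : x / m ≤ Real.exp (x / m) := by
    have := Real.add_one_le_exp (x / m)
    linarith
  calc (x / m) ^ m ≤ Real.exp (x / m) ^ m :=
        pow_le_pow_left₀ (div_nonneg hx hm0.le) h1 m
    _ = Real.exp x := by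
        rw [← Real.exp_nat_mul]
        congr 1
        field_simp

lemma summable_aux {γ : ℝ} (hγ : 0 < γ) (C₁ : ℝ) (hC₁ : 0 < C₁) :
    Summable (fun k : ℕ => (2 * ((k:ℝ)+1) + 3) * (C₁ * Real.exp (-((k:ℝ)+1) ^ γ))) := by
  set m : ℕ := max (Nat.ceil (3 / γ)) 1 with hmdef
  have hm1 : 1 ≤ m := le_max_right _ _
  have hm0 : (0:ℝ) < m := by exact_mod_cast hm1
  have hm3 : 3 ≤ γ * m := by
    have h1 : (3 / γ : ℝ) ≤ Nat.ceil (3 / γ) := Nat.le_ceil _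
    have h2 : (Nat.ceil (3 / γ) : ℝ) ≤ m := by
      exact_mod_cast Nat.cast_le.mpr (le_max_left _ _)
    have : 3 / γ ≤ (m : ℝ) := le_trans h1 h2
    calc (3:ℝ) = γ * (3 / γ) := by field_simp
      _ ≤ γ * m := by exact mul_le_mul_of_nonneg_left this hγ.le
  -- comparison bound
  have hbound : ∀ k : ℕ, (2 * ((k:ℝ)+1) + 3) * (C₁ * Real.exp (-((k:ℝ)+1) ^ γ))
      ≤ (5 * C₁ * (m:ℝ) ^ m) * ((k:ℝ)+1) ^ (-(2:ℝ)) := by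
    intro k
    have hk1 : (1:ℝ) ≤ (k:ℝ) + 1 := by have : (0:ℝ) ≤ (k:ℝ) := Nat.cast_nonneg k; linarith
    have hk0 : (0:ℝ) < (k:ℝ) + 1 := by positivity
    have hxpos : (0:ℝ) < ((k:ℝ)+1) ^ γ := Real.rpow_pos_of_pos hk0 γ
    have hexp : Real.exp (-((k:ℝ)+1) ^ γ) ≤ (m:ℝ) ^ m * (((k:ℝ)+1) ^ γ) ^ (-(m:ℝ)) := by
      have h1 : (((k:ℝ)+1) ^ γ / m) ^ m ≤ Real.exp (((k:ℝ)+1) ^ γ) :=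
        div_pow_le_exp hxpos.le hm1
      have h2 : Real.exp (-((k:ℝ)+1) ^ γ) = (Real.exp (((k:ℝ)+1) ^ γ))⁻¹ := by
        rw [Real.exp_neg]
      rw [h2]
      have h3 : (0:ℝ) < (((k:ℝ)+1) ^ γ / m) ^ m := by positivity
      have h4 := inv_anti₀ h3 h1
      refine le_trans h4 ?_
      rw [div_pow, Real.rpow_neg hxpos.le, ← Real.rpow_natCast (((k:ℝ)+1) ^ γ) m]
      rw [inv_div]
      rw [div_eq_mul_inv]
    have hrpow : (((k:ℝ)+1) ^ γ) ^ (-(m:ℝ)) ≤ ((k:ℝ)+1) ^ (-(3:ℝ)) := by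
      rw [← Real.rpow_mul hk0.le]
      apply Real.rpow_le_rpow_of_exponent_le hk1
      have : γ * (m:ℝ) ≥ 3 := hm3
      nlinarith
    have hfactor : (2 * ((k:ℝ)+1) + 3) ≤ 5 * ((k:ℝ)+1) := by nlinarith
    have hcomb : ((k:ℝ)+1) * ((k:ℝ)+1) ^ (-(3:ℝ)) = ((k:ℝ)+1) ^ (-(2:ℝ)) := by
      nth_rewrite 1 [← Real.rpow_one ((k:ℝ)+1)]
      rw [← Real.rpow_add hk0]
      norm_num
    have e1 : Real.exp (-((k:ℝ)+1) ^ γ) ≤ (m:ℝ) ^ m * ((k:ℝ)+1) ^ (-(3:ℝ)) := by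
      refine le_trans hexp ?_
      have : (0:ℝ) ≤ (m:ℝ) ^ m := by positivity
      exact mul_le_mul_of_nonneg_left hrpow this
    have hexp0 : (0:ℝ) < Real.exp (-((k:ℝ)+1) ^ γ) := Real.exp_pos _
    calc (2 * ((k:ℝ)+1) + 3) * (C₁ * Real.exp (-((k:ℝ)+1) ^ γ))
        ≤ (5 * ((k:ℝ)+1)) * (C₁ * ((m:ℝ) ^ m * ((k:ℝ)+1) ^ (-(3:ℝ)))) := by
          apply mul_le_mul hfactor
          · exact mul_le_mul_of_nonneg_left e1 hC₁.le
          · positivity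
          · positivity
      _ = (5 * C₁ * (m:ℝ) ^ m) * (((k:ℝ)+1) * ((k:ℝ)+1) ^ (-(3:ℝ))) := by ring
      _ = (5 * C₁ * (m:ℝ) ^ m) * ((k:ℝ)+1) ^ (-(2:ℝ)) := by rw [hcomb]
  have hsummable : Summable (fun k : ℕ => (5 * C₁ * (m:ℝ) ^ m) * ((k:ℝ)+1) ^ (-(2:ℝ))) := by
    apply Summable.mul_left
    have h1 : Summable (fun k : ℕ => ((k:ℝ)) ^ (-(2:ℝ))) :=
      Real.summable_nat_rpow.mpr (by norm_num)
    have h2 := (summable_nat_add_iff (f := fun k : ℕ => ((k:ℝ)) ^ (-(2:ℝ))) 1).mpr h1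
    convert h2 using 2 with k
    · rfl
    push_cast
    ring_nf
  apply Summable.of_nonneg_of_le _ hbound hsummable
  intro k
  positivity


open MeasureTheory
open scoped ENNReal

noncomputable def Kc (C₁ γ : ℝ) : ℝ≥0∞ :=
  4 + ∑' k : ℕ, ENNReal.ofReal ((2 * ((k:ℝ)+1) + 3) * (C₁ * Real.exp (-((k:ℝ)+1) ^ γ)))

lemma Kc_ne_top {C₁ γ : ℝ} (hC₁ : 0 < C₁) (hγ : 0 < γ) : Kc C₁ γ ≠ ∞ := by
  unfold Kc
  rw [← ENNReal.ofReal_tsum_of_nonneg (fun k => by positivity) (summable_aux hγ C₁ hC₁)]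
  simp [ENNReal.add_eq_top]

lemma sq_moment_le {Ω : Type} [MeasurableSpace Ω] (μ : Measure Ω) [IsProbabilityMeasure μ]
    {Y : Ω → ℝ} (hYm : Measurable Y) (hYnn : ∀ ω, 0 ≤ Y ω)
    {C₁ γ a : ℝ} (hγ : 0 < γ) (ha : 0 < a)
    (htail : ∀ u : ℝ, 0 < u →
      μ {ω | u < Y ω} ≤ ENNReal.ofReal (C₁ * Real.exp (-(a * u ^ γ)))) :
    ∫⁻ ω, ENNReal.ofReal (Y ω ^ 2) ∂μ ≤ ENNReal.ofReal (a ^ (-2 / γ)) * Kc C₁ γ := by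
  set h : ℝ := a ^ (-1 / γ) with hhdef
  have hh : 0 < h := Real.rpow_pos_of_pos ha _
  have hh2 : h ^ 2 = a ^ (-2 / γ) := by
    rw [hhdef, ← Real.rpow_natCast (a ^ (-1/γ)) 2, ← Real.rpow_mul ha.le]
    congr 1
    push_cast
    ring
  have hhγ : h ^ γ = a⁻¹ := by
    rw [hhdef, ← Real.rpow_mul ha.le]
    rw [show (-1 / γ) * γ = -1 by field_simp, Real.rpow_neg_one]
  -- the sets
  set s : ℕ → Set Ω := fun k => {ω | (k:ℝ) * h < Y ω} with hsdef
  have hsm : ∀ k, MeasurableSet (s k) := fun k =>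
    measurableSet_lt measurable_const hYm
  -- pointwise bound
  have hpoint : ∀ ω, ENNReal.ofReal (Y ω ^ 2) ≤
      ENNReal.ofReal (h ^ 2) +
        ∑' k : ℕ, (s k).indicator
          (fun _ => ENNReal.ofReal ((2 * (k:ℝ) + 3) * h ^ 2)) ω := by
    intro ω
    set m : ℕ := Nat.floor (Y ω / h) with hmdef
    have h1 : Y ω < ((m:ℝ) + 1) * h := by
      have h1' : Y ω / h < (m:ℝ) + 1 := Nat.lt_floor_add_one (Y ω / h)
      calc Y ω = (Y ω / h) * h := by field_simp
        _ < ((m:ℝ) + 1) * h := by exact mul_lt_mul_of_pos_right h1' hh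
    have h2 : (m:ℝ) * h ≤ Y ω := by
      have h2' : (m:ℝ) ≤ Y ω / h := Nat.floor_le (div_nonneg (hYnn ω) hh.le)
      calc (m:ℝ) * h ≤ (Y ω / h) * h := mul_le_mul_of_nonneg_right h2' hh.le
        _ = Y ω := by field_simp
    have hnat : ((m:ℝ)+1)^2 = 1 + ∑ k ∈ Finset.range m, (2*(k:ℝ)+3) := by
      induction m with
      | zero => simp
      | succ u ih =>
        rw [Finset.sum_range_succ, ← add_assoc, ← ih]
        push_cast
        ring
    have hsq : Y ω ^ 2 ≤ h ^ 2 + ∑ k ∈ Finset.range m, (2*(k:ℝ)+3) * h^2 := by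
      calc Y ω ^ 2 ≤ (((m:ℝ)+1) * h)^2 := by
            apply pow_le_pow_left₀ (hYnn ω) h1.le
        _ = h ^ 2 + ∑ k ∈ Finset.range m, (2*(k:ℝ)+3) * h^2 := by
            rw [mul_pow, hnat, add_mul, one_mul, Finset.sum_mul]
    calc ENNReal.ofReal (Y ω ^ 2)
        ≤ ENNReal.ofReal (h ^ 2 + ∑ k ∈ Finset.range m, (2*(k:ℝ)+3) * h^2) :=
          ENNReal.ofReal_le_ofReal hsq
      _ = ENNReal.ofReal (h^2) +
            ∑ k ∈ Finset.range m, ENNReal.ofReal ((2*(k:ℝ)+3) * h^2) := by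
          rw [ENNReal.ofReal_add (by positivity)
            (Finset.sum_nonneg fun k _ => by positivity),
            ENNReal.ofReal_sum_of_nonneg fun k _ => by positivity]
      _ ≤ ENNReal.ofReal (h^2) +
            ∑' k : ℕ, (s k).indicator
              (fun _ => ENNReal.ofReal ((2 * (k:ℝ) + 3) * h ^ 2)) ω := by
          gcongr
          have : ∀ k ∈ Finset.range m, ENNReal.ofReal ((2*(k:ℝ)+3) * h^2) =
              (s k).indicator (fun _ => ENNReal.ofReal ((2 * (k:ℝ) + 3) * h ^ 2)) ω := by
            intro k hk
            rw [Set.indicator_of_mem]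
            rw [hsdef]
            simp only [Set.mem_setOf_eq]
            have hkm : (k:ℝ) < (m:ℝ) := by exact_mod_cast Finset.mem_range.mp hk
            calc (k:ℝ) * h < (m:ℝ) * h := by exact mul_lt_mul_of_pos_right hkm hh
              _ ≤ Y ω := h2
          rw [Finset.sum_congr rfl this]
          exact ENNReal.sum_le_tsum _
  -- integrate
  have hlint : ∫⁻ ω, ENNReal.ofReal (Y ω ^ 2) ∂μ ≤
      ENNReal.ofReal (h^2) +
        ∑' k : ℕ, ENNReal.ofReal ((2 * (k:ℝ) + 3) * h ^ 2) * μ (s k) := by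
    calc ∫⁻ ω, ENNReal.ofReal (Y ω ^ 2) ∂μ
        ≤ ∫⁻ ω, (ENNReal.ofReal (h ^ 2) +
            ∑' k : ℕ, (s k).indicator
              (fun _ => ENNReal.ofReal ((2 * (k:ℝ) + 3) * h ^ 2)) ω) ∂μ :=
          lintegral_mono hpoint
      _ = ENNReal.ofReal (h^2) +
            ∑' k : ℕ, ENNReal.ofReal ((2 * (k:ℝ) + 3) * h ^ 2) * μ (s k) := by
          rw [lintegral_add_left measurable_const, lintegral_const,
            lintegral_tsum fun k => (measurable_const.indicator (hsm k)).aemeasurable]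
          congr 1
          · simp
          · congr 1
            funext k
            rw [lintegral_indicator (hsm k), setLIntegral_const]
  refine le_trans hlint ?_
  -- bound the tail series
  have htailbound : ∀ k : ℕ,
      ENNReal.ofReal ((2 * ((k:ℝ)+1) + 3) * h ^ 2) * μ (s (k+1)) ≤
        ENNReal.ofReal (h^2) *
          ENNReal.ofReal ((2 * ((k:ℝ)+1) + 3) * (C₁ * Real.exp (-((k:ℝ)+1) ^ γ))) := by
    intro k
    have hk0 : (0:ℝ) < ((k:ℝ)+1) := by positivity
    have hu : (0:ℝ) < ((k:ℝ)+1) * h := by positivity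
    have harg : a * (((k:ℝ)+1) * h) ^ γ = ((k:ℝ)+1) ^ γ := by
      rw [Real.mul_rpow hk0.le hh.le, hhγ]
      field_simp
    have hμ : μ (s (k+1)) ≤ ENNReal.ofReal (C₁ * Real.exp (-((k:ℝ)+1) ^ γ)) := by
      have := htail (((k:ℝ)+1) * h) hu
      rw [harg] at this
      refine le_trans (le_of_eq ?_) this
      rw [hsdef]
      congr 2
      push_cast
      ring
    calc ENNReal.ofReal ((2 * ((k:ℝ)+1) + 3) * h ^ 2) * μ (s (k+1))
        ≤ ENNReal.ofReal ((2 * ((k:ℝ)+1) + 3) * h ^ 2) *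
            ENNReal.ofReal (C₁ * Real.exp (-((k:ℝ)+1) ^ γ)) := by
          exact mul_le_mul_right hμ _
      _ = ENNReal.ofReal (h^2) *
            ENNReal.ofReal ((2 * ((k:ℝ)+1) + 3) * (C₁ * Real.exp (-((k:ℝ)+1) ^ γ))) := by
          rw [← ENNReal.ofReal_mul (by positivity), ← ENNReal.ofReal_mul (by positivity)]
          ring_nf
  have hsplit : ∑' k : ℕ, ENNReal.ofReal ((2 * (k:ℝ) + 3) * h ^ 2) * μ (s k) =
      ENNReal.ofReal (3 * h ^ 2) * μ (s 0) +
        ∑' k : ℕ, ENNReal.ofReal ((2 * ((k:ℝ)+1) + 3) * h ^ 2) * μ (s (k+1)) := by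
    rw [tsum_eq_zero_add' ENNReal.summable]
    norm_num
  rw [hsplit]
  have h3 : ENNReal.ofReal (3 * h ^ 2) * μ (s 0) ≤ ENNReal.ofReal (h^2) * 3 := by
    calc ENNReal.ofReal (3 * h ^ 2) * μ (s 0) ≤ ENNReal.ofReal (3 * h ^ 2) * 1 :=
          mul_le_mul_right prob_le_one _
      _ = ENNReal.ofReal (h^2) * 3 := by
          rw [mul_one, ENNReal.ofReal_mul (by norm_num : (0:ℝ) ≤ 3)]
          rw [mul_comm]
          norm_num
  have h4 : ∑' k : ℕ, ENNReal.ofReal ((2 * ((k:ℝ)+1) + 3) * h ^ 2) * μ (s (k+1)) ≤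
      ENNReal.ofReal (h^2) *
        ∑' k : ℕ, ENNReal.ofReal ((2 * ((k:ℝ)+1) + 3) * (C₁ * Real.exp (-((k:ℝ)+1) ^ γ))) := by
    rw [← ENNReal.tsum_mul_left]
    exact ENNReal.tsum_le_tsum htailbound
  calc ENNReal.ofReal (h^2) +
      (ENNReal.ofReal (3 * h ^ 2) * μ (s 0) +
        ∑' k : ℕ, ENNReal.ofReal ((2 * ((k:ℝ)+1) + 3) * h ^ 2) * μ (s (k+1)))
      ≤ ENNReal.ofReal (h^2) + (ENNReal.ofReal (h^2) * 3 +
          ENNReal.ofReal (h^2) *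
          ∑' k : ℕ, ENNReal.ofReal ((2 * ((k:ℝ)+1) + 3) * (C₁ * Real.exp (-((k:ℝ)+1) ^ γ)))) := by
        gcongr
    _ = ENNReal.ofReal (h^2) * Kc C₁ γ := by
        unfold Kc
        ring
    _ = ENNReal.ofReal (a ^ (-2/γ)) * Kc C₁ γ := by rw [hh2]


lemma sq_integral_le {Ω : Type} [MeasurableSpace Ω] (μ : Measure Ω) [IsProbabilityMeasure μ]
    {Y : Ω → ℝ} (hYm : Measurable Y) (hYnn : ∀ ω, 0 ≤ Y ω)
    {C₁ γ a : ℝ} (hC₁ : 0 < C₁) (hγ : 0 < γ) (ha : 0 < a)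
    (htail : ∀ u : ℝ, 0 < u →
      μ {ω | u < Y ω} ≤ ENNReal.ofReal (C₁ * Real.exp (-(a * u ^ γ)))) :
    Integrable (fun ω => Y ω ^ 2) μ ∧
      ∫ ω, Y ω ^ 2 ∂μ ≤ a ^ (-2 / γ) * (Kc C₁ γ).toReal := by
  have hlint := sq_moment_le μ hYm hYnn hγ ha htail
  have hKne := Kc_ne_top hC₁ hγ
  have hboundne : ENNReal.ofReal (a ^ (-2 / γ)) * Kc C₁ γ ≠ ∞ :=
    ENNReal.mul_ne_top ENNReal.ofReal_ne_top hKne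
  have hmeas : AEStronglyMeasurable (fun ω => Y ω ^ 2) μ :=
    ((hYm.pow_const 2).aestronglyMeasurable)
  have hint : Integrable (fun ω => Y ω ^ 2) μ := by
    refine ⟨hmeas, ?_⟩
    rw [hasFiniteIntegral_iff_norm]
    have : ∀ ω, ENNReal.ofReal ‖Y ω ^ 2‖ = ENNReal.ofReal (Y ω ^ 2) := by
      intro ω
      rw [Real.norm_eq_abs, abs_of_nonneg (by positivity)]
    simp_rw [this]
    exact lt_of_le_of_lt hlint hboundne.lt_top
  refine ⟨hint, ?_⟩
  rw [integral_eq_lintegral_of_nonneg_ae (Filter.Eventually.of_forall fun ω => by positivity) hmeas]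
  calc (∫⁻ ω, ENNReal.ofReal (Y ω ^ 2) ∂μ).toReal
      ≤ (ENNReal.ofReal (a ^ (-2 / γ)) * Kc C₁ γ).toReal := ENNReal.toReal_mono hboundne hlint
    _ = a ^ (-2 / γ) * (Kc C₁ γ).toReal := by
        rw [ENNReal.toReal_mul, ENNReal.toReal_ofReal (by positivity)]


lemma sq_l2norm {p : ℕ} (x : Fin p → ℝ) : l2norm x ^ 2 = ∑ i, (x i) ^ 2 := by
  unfold l2norm
  exact Real.sq_sqrt (Finset.sum_nonneg fun i _ => sq_nonneg _)

lemma coord_sq_le {p : ℕ} (x : Fin p → ℝ) (i : Fin p) : (x i) ^ 2 ≤ l2norm x ^ 2 := by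
  rw [sq_l2norm]
  exact Finset.single_le_sum (f := fun j => (x j) ^ 2) (fun j _ => sq_nonneg _)
    (Finset.mem_univ i)

lemma le_l2norm_iff {p : ℕ} (x : Fin p → ℝ) {δ : ℝ} (hδ : 0 ≤ δ) :
    δ ≤ l2norm x ↔ δ ^ 2 ≤ ∑ i, (x i) ^ 2 := by
  unfold l2norm
  exact Real.le_sqrt hδ (Finset.sum_nonneg fun i _ => sq_nonneg _)

lemma l2norm_measurable {p : ℕ} {Ω : Type} [MeasurableSpace Ω]
    {f g : Ω → Fin p → ℝ} (hf : Measurable f) (hg : Measurable g) :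
    Measurable fun ω => l2norm (f ω - g ω) := by
  unfold l2norm
  apply Measurable.sqrt
  apply Finset.measurable_sum
  intro i _
  have : ∀ ω, (f ω - g ω) i = f ω i - g ω i := fun ω => rfl
  simp only [this]
  exact (((measurable_pi_apply i).comp hf).sub ((measurable_pi_apply i).comp hg)).pow_const 2

end Stmt5Aux

/-- For recursive estimation processes `(θ̂_t^{(n)})` with `θ̂_0^{(n)} = θ*`,
per-step conditional tail bound with rate function `r(m) = m^κ` where `κ ≥ γ/2`, sample sizes
`n_0 = n`, `n_t = c_t n` with `c_t = t^{1+s}` (`s > 0`), which moreover form a martingale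
(`E[θ̂_t | F_{t−1}] = θ̂_{t−1}` a.s.), for every `δ > 0`:
`lim_{n→∞} limsup_{T→∞} P(‖θ̂_T^{(n)} − θ*‖₂ ≥ δ) = 0`. -/
theorem stmt_5
    {Ω : Type} [mΩ : MeasurableSpace Ω] (μ : Measure Ω) [IsProbabilityMeasure μ]
    (p : ℕ) (hp : 1 ≤ p) (θstar : Fin p → ℝ)
    (C₁ C₂ γ κ s : ℝ) (hC₁ : 0 < C₁) (hC₂ : 0 < C₂) (hγ : 0 < γ)
    (hκγ : γ / 2 ≤ κ) (hs : 0 < s)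
    (c : ℕ → ℝ) (hc0 : c 0 = 1) (hc : ∀ t : ℕ, 1 ≤ t → c t = (t : ℝ) ^ ((1 : ℝ) + s))
    (F : ℕ → Filtration ℕ mΩ)
    (θhat : ℕ → ℕ → Ω → (Fin p → ℝ))
    (hadapt : ∀ n, Adapted (F n) (θhat n))
    (h0 : ∀ n, ∀ᵐ ω ∂μ, θhat n 0 ω = θstar)
    (htail : ∀ n : ℕ, 1 ≤ n → ∀ t : ℕ, 1 ≤ t → ∀ δ' : ℝ, 0 < δ' →
      ∀ᵐ ω ∂μ,
        (μ[Set.indicator {ω' | δ' < l2norm (θhat n t ω' - θhat n (t - 1) ω')}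
            (fun _ => (1 : ℝ)) | (F n) (t - 1)]) ω
          ≤ C₁ * Real.exp (-C₂ * (c (t - 1) * n) ^ κ * δ' ^ γ))
    (hmart : ∀ n : ℕ, 1 ≤ n → ∀ t : ℕ, 1 ≤ t →
      μ[θhat n t | (F n) (t - 1)] =ᵐ[μ] θhat n (t - 1)) :
    ∀ δ : ℝ, 0 < δ →
      Tendsto (fun n : ℕ =>
          limsup (fun T : ℕ => (μ {ω | δ ≤ l2norm (θhat n T ω - θstar)}).toReal) atTop)
        atTop (nhds 0) := by
  intro δ hδ
  classical
  -- summability of the series ∑ (u+1)^(-(1+s))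
  have hS : Summable (fun u : ℕ => ((u:ℝ)+1) ^ (-(1+s))) := by
    have h1 : Summable (fun u : ℕ => ((u:ℝ)) ^ (-(1+s))) :=
      Real.summable_nat_rpow.mpr (by linarith)
    have h2 := (summable_nat_add_iff (f := fun u : ℕ => ((u:ℝ)) ^ (-(1+s))) 1).mpr h1
    refine h2.congr fun u => ?_
    push_cast
    ring_nf
  have hS0 : (0:ℝ) ≤ ∑' u : ℕ, ((u:ℝ)+1) ^ (-(1+s)) :=
    tsum_nonneg fun u => Real.rpow_nonneg (by positivity) _
  have hKr0 : (0:ℝ) ≤ (Stmt5Aux.Kc C₁ γ).toReal := ENNReal.toReal_nonneg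
  -- the key uniform-in-T bound
  have key : ∀ n : ℕ, 1 ≤ n → ∀ T : ℕ,
      (μ {ω | δ ≤ l2norm (θhat n T ω - θstar)}).toReal ≤
        (p:ℝ) * ((Stmt5Aux.Kc C₁ γ).toReal * C₂ ^ (-2/γ)) *
          (1 + ∑' u : ℕ, ((u:ℝ)+1) ^ (-(1+s))) / δ^2 * ((n:ℝ))⁻¹ := by
    intro n hn T
    have hn' : (1:ℝ) ≤ (n:ℝ) := by exact_mod_cast hn
    -- measurability facts
    have hXm : ∀ t, Measurable (θhat n t) :=
      fun t => (hadapt n t).mono ((F n).le t) le_rfl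
    have hXim : ∀ t (i : Fin p), Measurable (fun ω => θhat n t ω i) :=
      fun t i => (measurable_pi_apply i).comp (hXm t)
    have hYm : ∀ t : ℕ, Measurable (fun ω => l2norm (θhat n t ω - θhat n (t-1) ω)) :=
      fun t => Stmt5Aux.l2norm_measurable (hXm t) (hXm (t-1))
    -- sample size lower bound
    have hbge : ∀ t : ℕ, (1:ℝ) ≤ c t * n := by
      intro t
      cases t with
      | zero => rw [hc0]; simpa using hn'
      | succ u =>
        have h1 : (1:ℝ) ≤ c (u+1) := by
          rw [hc (u+1) (by omega)]
          apply Real.one_le_rpow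
          · have : (1:ℕ) ≤ u + 1 := by omega
            exact_mod_cast this
          · linarith
        nlinarith
    have hbpos : ∀ t : ℕ, (0:ℝ) < c t * n := fun t => lt_of_lt_of_le zero_lt_one (hbge t)
    -- tail bound for the increments
    have htailY : ∀ t : ℕ, 1 ≤ t → ∀ u : ℝ, 0 < u →
        μ {ω | u < l2norm (θhat n t ω - θhat n (t-1) ω)} ≤
          ENNReal.ofReal (C₁ * Real.exp (-((C₂ * (c (t-1) * n) ^ κ) * u ^ γ))) := by
      intro t ht u hu
      have hA : MeasurableSet {ω' | u < l2norm (θhat n t ω' - θhat n (t-1) ω')} :=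
        measurableSet_lt measurable_const (hYm t)
      have hcond := htail n hn t ht u hu
      have h1 : ∫ ω, (μ[Set.indicator {ω' | u < l2norm (θhat n t ω' - θhat n (t-1) ω')}
          (fun _ => (1:ℝ)) | (F n) (t-1)]) ω ∂μ
          = (μ {ω' | u < l2norm (θhat n t ω' - θhat n (t-1) ω')}).toReal := by
        rw [integral_condExp ((F n).le (t-1))]
        rw [integral_indicator_const (1:ℝ) hA]
        simp
        rfl
      have h2 : ∫ ω, (μ[Set.indicator {ω' | u < l2norm (θhat n t ω' - θhat n (t-1) ω')}
          (fun _ => (1:ℝ)) | (F n) (t-1)]) ω ∂μ ≤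
          C₁ * Real.exp (-C₂ * (c (t-1) * n) ^ κ * u ^ γ) := by
        calc ∫ ω, (μ[Set.indicator {ω' | u < l2norm (θhat n t ω' - θhat n (t-1) ω')}
              (fun _ => (1:ℝ)) | (F n) (t-1)]) ω ∂μ
            ≤ ∫ _ω, C₁ * Real.exp (-C₂ * (c (t-1) * n) ^ κ * u ^ γ) ∂μ :=
              integral_mono_ae integrable_condExp (integrable_const _) hcond
          _ = C₁ * Real.exp (-C₂ * (c (t-1) * n) ^ κ * u ^ γ) := by simp
      have h3 := h1 ▸ h2
      have h4 : μ {ω' | u < l2norm (θhat n t ω' - θhat n (t-1) ω')} ≤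
          ENNReal.ofReal (C₁ * Real.exp (-C₂ * (c (t-1) * n) ^ κ * u ^ γ)) := by
        rw [← ENNReal.ofReal_toReal (measure_ne_top μ _)]
        exact ENNReal.ofReal_le_ofReal h3
      refine le_trans h4 (le_of_eq ?_)
      congr 2
      ring
    -- second moment bound for the increments
    have hmom : ∀ t : ℕ, 1 ≤ t →
        Integrable (fun ω => l2norm (θhat n t ω - θhat n (t-1) ω) ^ 2) μ ∧
          ∫ ω, l2norm (θhat n t ω - θhat n (t-1) ω) ^ 2 ∂μ ≤
            ((Stmt5Aux.Kc C₁ γ).toReal * C₂ ^ (-2/γ)) * (c (t-1) * n)⁻¹ := by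
      intro t ht
      have hapos : 0 < C₂ * (c (t-1) * n) ^ κ :=
        mul_pos hC₂ (Real.rpow_pos_of_pos (hbpos (t-1)) κ)
      obtain ⟨h1, h2⟩ := Stmt5Aux.sq_integral_le μ (hYm t) (fun ω => Real.sqrt_nonneg _)
        hC₁ hγ hapos (htailY t ht)
      refine ⟨h1, le_trans h2 ?_⟩
      have hb1 : (1:ℝ) ≤ c (t-1) * n := hbge (t-1)
      have hb0 : (0:ℝ) < c (t-1) * n := hbpos (t-1)
      have e1 : (C₂ * (c (t-1) * n) ^ κ) ^ (-2/γ) =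
          C₂ ^ (-2/γ) * ((c (t-1) * n) ^ κ) ^ (-2/γ) :=
        Real.mul_rpow hC₂.le (Real.rpow_nonneg hb0.le κ)
      have e2 : ((c (t-1) * n) ^ κ) ^ (-2/γ) = (c (t-1) * n) ^ (κ * (-2/γ)) := by
        rw [← Real.rpow_mul hb0.le]
      have e3 : (c (t-1) * n) ^ (κ * (-2/γ)) ≤ (c (t-1) * n)⁻¹ := by
        have hexp : κ * (-2/γ) ≤ -1 := by
          have h' : κ * (-2/γ) = (-(2*κ))/γ := by ring
          rw [h', div_le_iff₀ hγ]
          linarith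
        calc (c (t-1) * n) ^ (κ * (-2/γ)) ≤ (c (t-1) * n) ^ (-1:ℝ) :=
              Real.rpow_le_rpow_of_exponent_le hb1 hexp
          _ = (c (t-1) * n)⁻¹ := Real.rpow_neg_one _
      calc (C₂ * (c (t-1) * n) ^ κ) ^ (-2/γ) * (Stmt5Aux.Kc C₁ γ).toReal
          = (Stmt5Aux.Kc C₁ γ).toReal * C₂ ^ (-2/γ) * ((c (t-1) * n) ^ (κ * (-2/γ))) := by
            rw [e1, e2]; ring
        _ ≤ (Stmt5Aux.Kc C₁ γ).toReal * C₂ ^ (-2/γ) * (c (t-1) * n)⁻¹ := by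
            have hc2 : (0:ℝ) ≤ C₂ ^ (-2/γ) := Real.rpow_nonneg hC₂.le _
            have hKr0' : (0:ℝ) ≤ (Stmt5Aux.Kc C₁ γ).toReal := ENNReal.toReal_nonneg
            exact mul_le_mul_of_nonneg_left e3 (by positivity)
    -- square-integrability of the coordinate increments
    have hD2int : ∀ t : ℕ, 1 ≤ t → ∀ i : Fin p,
        Integrable (fun ω => (θhat n t ω i - θhat n (t-1) ω i)^2) μ := by
      intro t ht i
      refine Integrable.mono' (hmom t ht).1
        ((((hXim t i).sub (hXim (t-1) i)).pow_const 2).aestronglyMeasurable)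
        (Filter.Eventually.of_forall fun ω => ?_)
      rw [Real.norm_eq_abs, abs_of_nonneg (sq_nonneg _)]
      have h := Stmt5Aux.coord_sq_le (θhat n t ω - θhat n (t-1) ω) i
      simpa using h
    have hD2le : ∀ t : ℕ, 1 ≤ t → ∀ i : Fin p,
        ∫ ω, (θhat n t ω i - θhat n (t-1) ω i)^2 ∂μ ≤
          ∫ ω, l2norm (θhat n t ω - θhat n (t-1) ω) ^ 2 ∂μ := by
      intro t ht i
      refine integral_mono (hD2int t ht i) (hmom t ht).1 fun ω => ?_
      have h := Stmt5Aux.coord_sq_le (θhat n t ω - θhat n (t-1) ω) i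
      simpa using h
    have hDmem : ∀ t : ℕ, 1 ≤ t → ∀ i : Fin p,
        MemLp (fun ω => θhat n t ω i - θhat n (t-1) ω i) 2 μ := by
      intro t ht i
      exact (memLp_two_iff_integrable_sq
        (((hXim t i).sub (hXim (t-1) i)).aestronglyMeasurable)).mpr (hD2int t ht i)
    -- L² of the centered coordinates
    have hZmem : ∀ t (i : Fin p), MemLp (fun ω => θhat n t ω i - θstar i) 2 μ := by
      intro t
      induction t with
      | zero =>
        intro i
        have h00 : (fun _ : Ω => (0:ℝ)) =ᵐ[μ] (fun ω => θhat n 0 ω i - θstar i) := by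
          filter_upwards [h0 n] with ω hω
          rw [hω]; ring
        exact (memLp_const (0:ℝ)).ae_eq h00
      | succ t ih =>
        intro i
        have heq : (fun ω => θhat n (t+1) ω i - θstar i)
            = (fun ω => θhat n t ω i - θstar i)
              + (fun ω => θhat n (t+1) ω i - θhat n t ω i) := by
          funext ω; simp only [Pi.add_apply]; ring
        rw [heq]
        refine (ih i).add ?_
        have h := hDmem (t+1) (by omega) i
        simpa using h
    have hXiint : ∀ t (i : Fin p), Integrable (fun ω => θhat n t ω i) μ := by
      intro t i
      have h1 := ((hZmem t i).integrable one_le_two).add (integrable_const (θstar i))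
      have heq : (fun ω => θhat n t ω i) =
          (fun ω => θhat n t ω i - θstar i) + (fun _ => θstar i) := by
        funext ω; simp only [Pi.add_apply]; ring
      rw [heq]; exact h1
    have hXvint : ∀ t, Integrable (θhat n t) μ := by
      intro t
      refine Integrable.mono' (g := fun ω => ∑ i, |θhat n t ω i|)
        (integrable_finset_sum _ fun i _ => (hXiint t i).abs)
        (hXm t).aestronglyMeasurable
        (Filter.Eventually.of_forall fun ω => ?_)
      rw [pi_norm_le_iff_of_nonneg (Finset.sum_nonneg fun i _ => abs_nonneg _)]
      intro i
      rw [Real.norm_eq_abs]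
      exact Finset.single_le_sum (f := fun j => |θhat n t ω j|) (fun j _ => abs_nonneg _)
        (Finset.mem_univ i)
    -- conditional expectation of increments vanishes, coordinatewise
    have hDcond : ∀ t : ℕ, 1 ≤ t → ∀ i : Fin p,
        μ[(fun ω => θhat n t ω i) - (fun ω => θhat n (t-1) ω i) | (F n) (t-1)]
          =ᵐ[μ] (fun _ => (0:ℝ)) := by
      intro t ht i
      have hm := (F n).le (t-1)
      have hSMprev : StronglyMeasurable[(F n) (t-1)] (fun ω => θhat n (t-1) ω i) :=
        ((measurable_pi_apply i).comp (hadapt n (t-1))).stronglyMeasurable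
      have hproj : ∀ (u : ℕ) (s2 : Set Ω), ∫ x in s2, θhat n u x i ∂μ
          = (∫ x in s2, θhat n u x ∂μ) i := by
        intro u s2
        have h := (ContinuousLinearMap.proj (R := ℝ) (φ := fun _ : Fin p => ℝ)
          i).integral_comp_comm ((hXvint u).integrableOn (s := s2))
        simpa using h
      have hcc : (fun ω => θhat n (t-1) ω i) =ᵐ[μ]
          μ[(fun ω => θhat n t ω i) | (F n) (t-1)] := by
        refine ae_eq_condExp_of_forall_setIntegral_eq hm (hXiint t i)
          (fun s2 _ _ => (hXiint (t-1) i).integrableOn) ?_ ?_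
        · intro s2 hs2 _
          have hvec := setIntegral_condExp hm (hXvint t) hs2
          have hae : μ[θhat n t | (F n) (t-1)] =ᵐ[μ] θhat n (t-1) := hmart n hn t ht
          have hvec2 : ∫ x in s2, θhat n (t-1) x ∂μ = ∫ x in s2, θhat n t x ∂μ := by
            rw [← hvec]
            refine setIntegral_congr_ae (hm s2 hs2) ?_
            filter_upwards [hae] with ω hω _
            exact hω.symm
          rw [hproj (t-1) s2, hproj t s2, hvec2]
        · exact StronglyMeasurable.aestronglyMeasurable hSMprev
      have hsub := condExp_sub (m := (F n) (t-1)) (μ := μ) (hXiint t i) (hXiint (t-1) i)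
      have hprev : μ[(fun ω => θhat n (t-1) ω i) | (F n) (t-1)]
          = (fun ω => θhat n (t-1) ω i) :=
        condExp_of_stronglyMeasurable hm hSMprev (hXiint (t-1) i)
      filter_upwards [hsub, hcc] with ω h1 h2
      rw [h1]
      simp only [Pi.sub_apply, hprev]
      rw [← h2]
      ring
    -- integrability of the cross terms
    have hprodint : ∀ t : ℕ, 1 ≤ t → ∀ i : Fin p,
        Integrable ((fun ω => θhat n (t-1) ω i - θstar i) *
          ((fun ω => θhat n t ω i) - (fun ω => θhat n (t-1) ω i))) μ := by
      intro t ht i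
      have hZpmem : MemLp (fun ω => θhat n (t-1) ω i - θstar i) 2 μ := hZmem (t-1) i
      have hDmem' : MemLp ((fun ω => θhat n t ω i) - (fun ω => θhat n (t-1) ω i)) 2 μ :=
        hDmem t ht i
      refine Integrable.mono'
        ((hZpmem.integrable_sq.add hDmem'.integrable_sq).div_const 2)
        (hZpmem.aestronglyMeasurable.mul hDmem'.aestronglyMeasurable)
        (Filter.Eventually.of_forall fun ω => ?_)
      have hle : |(θhat n (t-1) ω i - θstar i) * (θhat n t ω i - θhat n (t-1) ω i)| ≤
          ((θhat n (t-1) ω i - θstar i)^2 + (θhat n t ω i - θhat n (t-1) ω i)^2)/2 := by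
        rw [abs_mul]
        nlinarith [sq_nonneg (|θhat n (t-1) ω i - θstar i| - |θhat n t ω i - θhat n (t-1) ω i|),
          sq_abs (θhat n (t-1) ω i - θstar i), sq_abs (θhat n t ω i - θhat n (t-1) ω i),
          abs_nonneg (θhat n (t-1) ω i - θstar i), abs_nonneg (θhat n t ω i - θhat n (t-1) ω i)]
      rw [abs_mul] at hle
      simpa [Real.norm_eq_abs] using hle
    -- cross terms vanish
    have hcross : ∀ t : ℕ, 1 ≤ t → ∀ i : Fin p,
        ∫ ω, (θhat n (t-1) ω i - θstar i) * (θhat n t ω i - θhat n (t-1) ω i) ∂μ = 0 := by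
      intro t ht i
      have hm := (F n).le (t-1)
      have hZpSM : StronglyMeasurable[(F n) (t-1)] (fun ω => θhat n (t-1) ω i - θstar i) :=
        (((measurable_pi_apply i).comp
          (hadapt n (t-1))).sub measurable_const).stronglyMeasurable
      have hDint : Integrable ((fun ω => θhat n t ω i) - (fun ω => θhat n (t-1) ω i)) μ :=
        (hDmem t ht i).integrable one_le_two
      have hprod := hprodint t ht i
      have e2 := condExp_mul_of_stronglyMeasurable_left hZpSM hprod hDint
      have e3 : μ[(fun ω => θhat n (t-1) ω i - θstar i) *
          ((fun ω => θhat n t ω i) - (fun ω => θhat n (t-1) ω i)) | (F n) (t-1)]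
          =ᵐ[μ] (fun _ => (0:ℝ)) := by
        filter_upwards [e2, hDcond t ht i] with ω h1 h2
        rw [h1, Pi.mul_apply, h2]
        ring
      have e4 : ∫ ω, ((fun ω => θhat n (t-1) ω i - θstar i) *
          ((fun ω => θhat n t ω i) - (fun ω => θhat n (t-1) ω i))) ω ∂μ = 0 := by
        rw [← integral_condExp hm
          (f := (fun ω => θhat n (t-1) ω i - θstar i) *
            ((fun ω => θhat n t ω i) - (fun ω => θhat n (t-1) ω i))),
          integral_congr_ae e3]
        simp
      exact e4
    -- energy identity / estimate
    have henergy : ∀ (i : Fin p) (T : ℕ), ∫ ω, (θhat n T ω i - θstar i)^2 ∂μ ≤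
        ∑ t ∈ Finset.range T, ∫ ω, l2norm (θhat n (t+1) ω - θhat n t ω) ^ 2 ∂μ := by
      intro i T
      induction T with
      | zero =>
        have h00 : (fun ω => (θhat n 0 ω i - θstar i)^2) =ᵐ[μ] (fun _ => (0:ℝ)) := by
          filter_upwards [h0 n] with ω hω
          rw [hω]; ring
        rw [integral_congr_ae h00]
        simp
      | succ T ih =>
        have h1T : 1 ≤ T + 1 := by omega
        have hD2 : Integrable (fun ω => (θhat n (T+1) ω i - θhat n T ω i)^2) μ := by
          have h := hD2int (T+1) h1T i
          simpa using h
        have hZ2 : Integrable (fun ω => (θhat n T ω i - θstar i)^2) μ :=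
          (hZmem T i).integrable_sq
        have hCrossInt : Integrable (fun ω => (θhat n T ω i - θstar i) *
            (θhat n (T+1) ω i - θhat n T ω i)) μ := by
          have h := hprodint (T+1) h1T i
          simpa [Pi.mul_def, Pi.sub_def] using h
        have hCrossZero : ∫ ω, (θhat n T ω i - θstar i) *
            (θhat n (T+1) ω i - θhat n T ω i) ∂μ = 0 := by
          have h := hcross (T+1) h1T i
          simpa using h
        have hYint : Integrable (fun ω => l2norm (θhat n (T+1) ω - θhat n T ω) ^ 2) μ := by
          have h := (hmom (T+1) h1T).1
          simpa using h
        have hD2leY : ∫ ω, (θhat n (T+1) ω i - θhat n T ω i)^2 ∂μ ≤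
            ∫ ω, l2norm (θhat n (T+1) ω - θhat n T ω) ^ 2 ∂μ := by
          have h := hD2le (T+1) h1T i
          simpa using h
        have hsplit : ∀ ω : Ω, (θhat n (T+1) ω i - θstar i)^2 =
            (θhat n T ω i - θstar i)^2 +
              (2 * ((θhat n T ω i - θstar i) * (θhat n (T+1) ω i - θhat n T ω i)) +
                (θhat n (T+1) ω i - θhat n T ω i)^2) := by
          intro ω; ring
        calc ∫ ω, (θhat n (T+1) ω i - θstar i)^2 ∂μ
            = ∫ ω, ((θhat n T ω i - θstar i)^2 +
                (2 * ((θhat n T ω i - θstar i) * (θhat n (T+1) ω i - θhat n T ω i)) +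
                  (θhat n (T+1) ω i - θhat n T ω i)^2)) ∂μ := by
              exact integral_congr_ae (Filter.Eventually.of_forall hsplit)
          _ = (∫ ω, (θhat n T ω i - θstar i)^2 ∂μ) +
                ((∫ ω, 2 * ((θhat n T ω i - θstar i) *
                    (θhat n (T+1) ω i - θhat n T ω i)) ∂μ) +
                  ∫ ω, (θhat n (T+1) ω i - θhat n T ω i)^2 ∂μ) := by
              have hsum2 : Integrable (fun ω =>
                  2 * ((θhat n T ω i - θstar i) * (θhat n (T+1) ω i - θhat n T ω i)) +
                    (θhat n (T+1) ω i - θhat n T ω i)^2) μ :=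
                (hCrossInt.const_mul 2).add hD2
              rw [integral_add hZ2 hsum2, integral_add (hCrossInt.const_mul 2) hD2]
          _ = (∫ ω, (θhat n T ω i - θstar i)^2 ∂μ) +
                ∫ ω, (θhat n (T+1) ω i - θhat n T ω i)^2 ∂μ := by
              rw [integral_const_mul, hCrossZero]
              ring
          _ ≤ (∑ t ∈ Finset.range T, ∫ ω, l2norm (θhat n (t+1) ω - θhat n t ω) ^ 2 ∂μ) +
                ∫ ω, l2norm (θhat n (T+1) ω - θhat n T ω) ^ 2 ∂μ := by
              exact add_le_add ih hD2leY
          _ = ∑ t ∈ Finset.range (T+1), ∫ ω, l2norm (θhat n (t+1) ω - θhat n t ω) ^ 2 ∂μ := by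
              rw [Finset.sum_range_succ]
    -- partial sums of 1/c are bounded
    have hsum_c : ∀ T : ℕ, ∑ t ∈ Finset.range T, (c t * n)⁻¹ ≤
        (1 + ∑' u : ℕ, ((u:ℝ)+1) ^ (-(1+s))) * (n:ℝ)⁻¹ := by
      intro T
      have hfac : ∀ t, (c t * n)⁻¹ = (c t)⁻¹ * (n:ℝ)⁻¹ := fun t => mul_inv _ _
      have hcsum : ∑ t ∈ Finset.range T, (c t)⁻¹ ≤
          1 + ∑' u : ℕ, ((u:ℝ)+1) ^ (-(1+s)) := by
        cases T with
        | zero => rw [Finset.sum_range_zero]; linarith [hS0]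
        | succ T' =>
          rw [Finset.sum_range_succ']
          have h1 : ∀ t ∈ Finset.range T', (c (t+1))⁻¹ = ((t:ℝ)+1) ^ (-(1+s)) := by
            intro t _
            rw [hc (t+1) (by omega), ← Real.rpow_neg (by positivity)]
            push_cast
            ring_nf
          rw [Finset.sum_congr rfl h1, hc0, inv_one]
          have h2 : ∑ t ∈ Finset.range T', ((t:ℝ)+1) ^ (-(1+s)) ≤
              ∑' u : ℕ, ((u:ℝ)+1) ^ (-(1+s)) :=
            Summable.sum_le_tsum (Finset.range T') (fun k _ => Real.rpow_nonneg (by positivity) _) hS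
          linarith
      calc ∑ t ∈ Finset.range T, (c t * n)⁻¹
          = (∑ t ∈ Finset.range T, (c t)⁻¹) * (n:ℝ)⁻¹ := by
            rw [Finset.sum_mul]
            exact Finset.sum_congr rfl fun t _ => hfac t
        _ ≤ (1 + ∑' u : ℕ, ((u:ℝ)+1) ^ (-(1+s))) * (n:ℝ)⁻¹ := by
            have : (0:ℝ) ≤ (n:ℝ)⁻¹ := by positivity
            exact mul_le_mul_of_nonneg_right hcsum this
    -- total second moment bound
    have hGint : Integrable (fun ω => ∑ i, (θhat n T ω i - θstar i)^2) μ :=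
      integrable_finset_sum _ fun i _ => (hZmem T i).integrable_sq
    have hGbound : ∫ ω, (∑ i, (θhat n T ω i - θstar i)^2) ∂μ ≤
        (p:ℝ) * ((Stmt5Aux.Kc C₁ γ).toReal * C₂ ^ (-2/γ)) *
          (1 + ∑' u : ℕ, ((u:ℝ)+1) ^ (-(1+s))) * (n:ℝ)⁻¹ := by
      have hstep : ∀ t ∈ Finset.range T,
          ∫ ω, l2norm (θhat n (t+1) ω - θhat n t ω) ^ 2 ∂μ ≤
            ((Stmt5Aux.Kc C₁ γ).toReal * C₂ ^ (-2/γ)) * (c t * n)⁻¹ := by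
        intro t _
        have h := (hmom (t+1) (by omega)).2
        simpa using h
      have hC2nn : (0:ℝ) ≤ C₂ ^ (-2/γ) := Real.rpow_nonneg hC₂.le _
      calc ∫ ω, (∑ i, (θhat n T ω i - θstar i)^2) ∂μ
          = ∑ i, ∫ ω, (θhat n T ω i - θstar i)^2 ∂μ :=
            integral_finset_sum _ fun i _ => (hZmem T i).integrable_sq
        _ ≤ ∑ _i : Fin p, ∑ t ∈ Finset.range T,
              ∫ ω, l2norm (θhat n (t+1) ω - θhat n t ω) ^ 2 ∂μ :=
            Finset.sum_le_sum fun i _ => henergy i T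
        _ = (p:ℝ) * ∑ t ∈ Finset.range T,
              ∫ ω, l2norm (θhat n (t+1) ω - θhat n t ω) ^ 2 ∂μ := by
            rw [Finset.sum_const, Finset.card_univ, Fintype.card_fin, nsmul_eq_mul]
        _ ≤ (p:ℝ) * ∑ t ∈ Finset.range T,
              ((Stmt5Aux.Kc C₁ γ).toReal * C₂ ^ (-2/γ)) * (c t * n)⁻¹ := by
            refine mul_le_mul_of_nonneg_left (Finset.sum_le_sum hstep) (by positivity)
        _ = (p:ℝ) * (((Stmt5Aux.Kc C₁ γ).toReal * C₂ ^ (-2/γ)) *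
              ∑ t ∈ Finset.range T, (c t * n)⁻¹) := by
            conv_rhs => rw [Finset.mul_sum]
        _ ≤ (p:ℝ) * (((Stmt5Aux.Kc C₁ γ).toReal * C₂ ^ (-2/γ)) *
              ((1 + ∑' u : ℕ, ((u:ℝ)+1) ^ (-(1+s))) * (n:ℝ)⁻¹)) := by
            refine mul_le_mul_of_nonneg_left ?_ (by positivity)
            exact mul_le_mul_of_nonneg_left (hsum_c T) (by positivity)
        _ = (p:ℝ) * ((Stmt5Aux.Kc C₁ γ).toReal * C₂ ^ (-2/γ)) *
              (1 + ∑' u : ℕ, ((u:ℝ)+1) ^ (-(1+s))) * (n:ℝ)⁻¹ := by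
            ring
    -- Chebyshev
    have hset : {ω | δ ≤ l2norm (θhat n T ω - θstar)} =
        {ω | δ^2 ≤ ∑ i, (θhat n T ω i - θstar i)^2} := by
      ext ω
      simp only [Set.mem_setOf_eq]
      rw [Stmt5Aux.le_l2norm_iff _ hδ.le]
      constructor
      · intro h; refine le_trans h (le_of_eq ?_); apply Finset.sum_congr rfl; intro i _; rfl
      · intro h; refine le_trans h (le_of_eq ?_); apply Finset.sum_congr rfl; intro i _; rfl
    have hmark := mul_meas_ge_le_integral_of_nonneg
      (Filter.Eventually.of_forall fun ω => Finset.sum_nonneg fun i _ => sq_nonneg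
        ((θhat n T ω i - θstar i)))
      hGint (δ^2)
    have hδ2 : (0:ℝ) < δ^2 := by positivity
    rw [hset]
    have h2 : (μ {ω | δ^2 ≤ ∑ i, (θhat n T ω i - θstar i)^2}).toReal ≤
        (∫ ω, (∑ i, (θhat n T ω i - θstar i)^2) ∂μ) / δ^2 := by
      rw [le_div_iff₀ hδ2]
      calc (μ {ω | δ^2 ≤ ∑ i, (θhat n T ω i - θstar i)^2}).toReal * δ^2
          = δ^2 * (μ {ω | δ^2 ≤ ∑ i, (θhat n T ω i - θstar i)^2}).toReal := by ring
        _ ≤ ∫ ω, (∑ i, (θhat n T ω i - θstar i)^2) ∂μ := hmark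
    refine le_trans h2 ?_
    rw [div_le_iff₀ hδ2]
    calc ∫ ω, (∑ i, (θhat n T ω i - θstar i)^2) ∂μ
        ≤ (p:ℝ) * ((Stmt5Aux.Kc C₁ γ).toReal * C₂ ^ (-2/γ)) *
            (1 + ∑' u : ℕ, ((u:ℝ)+1) ^ (-(1+s))) * (n:ℝ)⁻¹ := hGbound
      _ = (p:ℝ) * ((Stmt5Aux.Kc C₁ γ).toReal * C₂ ^ (-2/γ)) *
            (1 + ∑' u : ℕ, ((u:ℝ)+1) ^ (-(1+s))) / δ^2 * (n:ℝ)⁻¹ * δ^2 := by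
          field_simp
  -- squeeze argument
  have hCst0 : (0:ℝ) ≤ (p:ℝ) * ((Stmt5Aux.Kc C₁ γ).toReal * C₂ ^ (-2/γ)) *
      (1 + ∑' u : ℕ, ((u:ℝ)+1) ^ (-(1+s))) / δ^2 := by
    have : (0:ℝ) ≤ C₂ ^ (-2/γ) := Real.rpow_nonneg hC₂.le _
    positivity
  apply squeeze_zero'
    (g := fun n : ℕ => (p:ℝ) * ((Stmt5Aux.Kc C₁ γ).toReal * C₂ ^ (-2/γ)) *
      (1 + ∑' u : ℕ, ((u:ℝ)+1) ^ (-(1+s))) / δ^2 * ((n:ℝ))⁻¹)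
  · filter_upwards [eventually_ge_atTop 1] with n hn
    refine le_limsup_of_frequently_le (Frequently.of_forall fun T => ENNReal.toReal_nonneg) ?_
    exact isBoundedUnder_of ⟨_, fun T => key n hn T⟩
  · filter_upwards [eventually_ge_atTop 1] with n hn
    have hb : IsBoundedUnder (· ≥ ·) atTop
        (fun T : ℕ => (μ {ω | δ ≤ l2norm (θhat n T ω - θstar)}).toReal) :=
      isBoundedUnder_of ⟨0, fun T => ENNReal.toReal_nonneg⟩
    exact limsup_le_of_le hb.isCoboundedUnder_le (Eventually.of_forall fun T => key n hn T)
  · have h1 := tendsto_one_div_atTop_nhds_zero_nat.const_mul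
      ((p:ℝ) * ((Stmt5Aux.Kc C₁ γ).toReal * C₂ ^ (-2/γ)) *
        (1 + ∑' u : ℕ, ((u:ℝ)+1) ^ (-(1+s))) / δ^2)
    simpa [one_div] using h1
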